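/- (Sum rule for subdifferentials) Let X₁ be a semidivisible additive commutative group, X₂ an additive commutative group, T : X₁ → X₂ additive, and f : X₁ → ℝ, g : X₂ → ℝ convex. Then for every x₀ ∈ X₁ and every additive φ : X₁ → ℝ: φ ∈ ∂(f + g ∘ T)(x₀) if and only if there exist a ∈ ∂f(x₀) and b ∈ ∂g(T x₀) with φ = a + b ∘ T. (The 'if' direction holds for arbitrary f and g without convexity or semidivisibility.) -/

import Mathlib

/-- A real-valued function on an additive commutative monoid is convex. -/
def RConvexFn {X : Type*} [AddCommMonoid X] (f : X → ℝ) : Prop :=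
  ∀ (n : ℕ), 0 < n → ∀ m : Fin n → ℕ, (∀ i, 0 < m i) →
    ∀ (xs : Fin n → X) (x : X), (∑ i, m i) • x = ∑ i, m i • xs i →
      ((∑ i, m i : ℕ) : ℝ) * f x ≤ ∑ i, (m i : ℝ) * f (xs i)

/-- The subdifferential of `f` at `x₀`: additive maps `a : X → ℝ` with
`f(x₀) + a(h) ≤ f(x₀ + h)` for all `h`. -/
def subdiff {X : Type*} [AddCommGroup X] (f : X → ℝ) (x₀ : X) : Set (X → ℝ) :=
  {a | (∀ x y, a (x + y) = a x + a y) ∧ ∀ h, f x₀ + a h ≤ f (x₀ + h)}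

section Aux

open Finsupp Finset

variable {X : Type*} [AddCommGroup X]

/-- The sublinear gauge built from `C`. -/
noncomputable def qgauge (C : X → ℝ) (w : X →₀ ℝ) : ℝ :=
  w.sum fun x t => max (t * C x) (-(t * C (-x)))

theorem qgauge_eq (C : X → ℝ) {w : X →₀ ℝ} {s : Finset X} (hs : w.support ⊆ s) :
    qgauge C w = ∑ x ∈ s, max (w x * C x) (-(w x * C (-x))) := by
  exact Finsupp.sum_of_support_subset w hs _ (fun i _ => by simp)

theorem qgauge_add (C : X → ℝ) (w v : X →₀ ℝ) :
    qgauge C (w + v) ≤ qgauge C w + qgauge C v := by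
  classical
  rw [qgauge_eq C (s := w.support ∪ v.support) (Finsupp.support_add.trans (by rfl)),
    qgauge_eq C (s := w.support ∪ v.support) (subset_union_left),
    qgauge_eq C (s := w.support ∪ v.support) (subset_union_right), ← Finset.sum_add_distrib]
  refine Finset.sum_le_sum fun x _ => ?_
  rw [Finsupp.add_apply]
  apply max_le
  · rw [add_mul]
    exact add_le_add (le_max_left _ _) (le_max_left _ _)
  · rw [add_mul, neg_add]
    exact add_le_add (le_max_right _ _) (le_max_right _ _)

theorem qgauge_smul (C : X → ℝ) {c : ℝ} (hc : 0 < c) (w : X →₀ ℝ) :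
    qgauge C (c • w) = c * qgauge C w := by
  classical
  rw [qgauge_eq C (s := w.support) Finsupp.support_smul,
    qgauge_eq C (s := w.support) (by rfl), Finset.mul_sum]
  refine Finset.sum_congr rfl fun x _ => ?_
  rw [Finsupp.smul_apply, smul_eq_mul, mul_max_of_nonneg _ _ hc.le]
  congr 1 <;> ring

/-- Cyclic positivity hypothesis on `C`. -/
def CycPos (C : X → ℝ) : Prop :=
  ∀ (s : Finset X) (m : X → ℕ) (z : X → X), (∀ x ∈ s, 0 < m x) →
    (∑ x ∈ s, m x • z x) = 0 → 0 ≤ ∑ x ∈ s, (m x : ℝ) * C (z x)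

theorem CycPos.pair {C : X → ℝ} (hP : CycPos C) (x : X) : 0 ≤ C x + C (-x) := by
  classical
  rcases eq_or_ne x (-x) with h | h
  · have := hP {x} (fun _ => 2) id (fun _ _ => two_pos) (by
      simp [two_nsmul]; nth_rewrite 2 [h]; simp)
    simp at this
    rw [← h]
    linarith
  · have := hP {x, -x} (fun _ => 1) id (fun _ _ => one_pos) (by
      rw [Finset.sum_pair h]; simp)
    rw [Finset.sum_pair h] at this
    simpa using this

/-- Integer combinations of relation vectors have nonnegative gauge. -/
theorem qgauge_nonneg_int {C : X → ℝ} (hP : CycPos C) (n : ℕ) (z : Fin n → ℤ)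
    (xs ys : Fin n → X) :
    0 ≤ qgauge C (∑ i, (z i : ℝ) •
      (Finsupp.single (xs i + ys i) (1:ℝ) - Finsupp.single (xs i) 1 - Finsupp.single (ys i) 1)) := by
  classical
  set r' : Fin n → (X →₀ ℤ) := fun i =>
    Finsupp.single (xs i + ys i) (1:ℤ) - Finsupp.single (xs i) 1 - Finsupp.single (ys i) 1 with hr'
  set v' : X →₀ ℤ := ∑ i, z i • r' i with hv'
  have hι : (Finsupp.mapRange.addMonoidHom (Int.castAddHom ℝ)) v' =
      ∑ i, (z i : ℝ) • (Finsupp.single (xs i + ys i) (1:ℝ) - Finsupp.single (xs i) 1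
        - Finsupp.single (ys i) 1) := by
    rw [hv', map_sum]
    refine Finset.sum_congr rfl fun i _ => ?_
    rw [map_zsmul, Int.cast_smul_eq_zsmul ℝ]
    congr 1
    rw [hr', map_sub, map_sub]
    simp [Finsupp.mapRange.addMonoidHom_apply, Finsupp.mapRange_single]
  have hσ : (Finsupp.linearCombination ℤ (id : X → X)) v' = 0 := by
    rw [hv', map_sum]
    refine Finset.sum_eq_zero fun i _ => ?_
    rw [map_zsmul]
    simp [hr', Finsupp.linearCombination_single]
  rw [← hι]
  have happ : ∀ x : X, (Finsupp.mapRange.addMonoidHom (Int.castAddHom ℝ)) v' x = ((v' x : ℤ) : ℝ) := by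
    intro x
    simp [Finsupp.mapRange.addMonoidHom_apply, Finsupp.mapRange_apply]
  have hsupp : ((Finsupp.mapRange.addMonoidHom (Int.castAddHom ℝ)) v').support ⊆ v'.support := by
    rw [Finsupp.mapRange.addMonoidHom_apply]
    exact Finsupp.support_mapRange
  rw [qgauge_eq C hsupp]
  have hval : ∀ x ∈ v'.support,
      max ((Finsupp.mapRange.addMonoidHom (Int.castAddHom ℝ)) v' x * C x)
        (-((Finsupp.mapRange.addMonoidHom (Int.castAddHom ℝ)) v' x * C (-x)))
      = (((v' x).natAbs : ℕ) : ℝ) * C (if 0 ≤ v' x then x else -x) := by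
    intro x hx
    have hx0 : v' x ≠ 0 := Finsupp.mem_support_iff.mp hx
    rw [happ]
    rcases lt_or_gt_of_ne hx0 with hneg | hpos
    · rw [if_neg (not_le.mpr hneg)]
      have hc : ((v' x : ℤ) : ℝ) < 0 := by exact_mod_cast hneg
      rw [max_eq_right (by nlinarith [hP.pair x])]
      have : (((v' x).natAbs : ℕ) : ℝ) = -((v' x : ℤ) : ℝ) := by
        rw [Nat.cast_natAbs, abs_of_neg hneg]
        push_cast
        ring
      rw [this]; ring
    · rw [if_pos hpos.le]
      have hc : (0:ℝ) < ((v' x : ℤ) : ℝ) := by exact_mod_cast hpos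
      rw [max_eq_left (by nlinarith [hP.pair x])]
      have : (((v' x).natAbs : ℕ) : ℝ) = ((v' x : ℤ) : ℝ) := by
        rw [Nat.cast_natAbs, abs_of_pos hpos]
      rw [this]
  rw [Finset.sum_congr rfl hval]
  refine hP v'.support (fun x => (v' x).natAbs) (fun x => if 0 ≤ v' x then x else -x)
    (fun x hx => Int.natAbs_pos.mpr (Finsupp.mem_support_iff.mp hx)) ?_
  have : ∀ x ∈ v'.support, (v' x).natAbs • (if 0 ≤ v' x then x else -x) = v' x • x := by
    intro x _
    rcases le_or_gt 0 (v' x) with hge | hlt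
    · have h1 : (((v' x).natAbs : ℕ) : ℤ) = v' x := by omega
      rw [if_pos hge, ← natCast_zsmul, h1]
    · have h1 : (((v' x).natAbs : ℕ) : ℤ) = -(v' x) := by omega
      rw [if_neg (not_le.mpr hlt), smul_neg, ← natCast_zsmul, h1, neg_zsmul, neg_neg]
  rw [Finset.sum_congr rfl this]
  have := hσ
  rw [Finsupp.linearCombination_apply] at this
  exact this

theorem qgauge_nonneg_span {C : X → ℝ} (hP : CycPos C) {w : X →₀ ℝ}
    (hw : w ∈ Submodule.span ℝ {u : X →₀ ℝ | ∃ x y : X,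
      u = Finsupp.single (x+y) (1:ℝ) - Finsupp.single x 1 - Finsupp.single y 1}) :
    0 ≤ qgauge C w := by
  classical
  obtain ⟨nn, c, rr, hsum⟩ := Submodule.mem_span_set'.mp hw
  choose xs ys hxy using fun i => (rr i).2
  set F' : Finset X := Finset.univ.biUnion (fun i : Fin nn => ((rr i : X →₀ ℝ)).support) with hF'
  have hsupp : ∀ c' : Fin nn → ℝ, (∑ i, c' i • (rr i : X →₀ ℝ)).support ⊆ F' := by
    intro c'
    exact (Finsupp.support_finset_sum).trans
      (Finset.biUnion_mono fun i _ => Finsupp.support_smul)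
  set θ : (Fin nn → ℝ) → ℝ := fun c' => ∑ x ∈ F',
    max ((∑ i, c' i * (rr i : X →₀ ℝ) x) * C x)
      (-((∑ i, c' i * (rr i : X →₀ ℝ) x) * C (-x))) with hθ
  have hθq : ∀ c' : Fin nn → ℝ, θ c' = qgauge C (∑ i, c' i • (rr i : X →₀ ℝ)) := by
    intro c'
    rw [qgauge_eq C (hsupp c')]
    refine Finset.sum_congr rfl fun x _ => ?_
    rw [Finsupp.finset_sum_apply]
    simp [Finsupp.smul_apply, smul_eq_mul]
  have hcont : Continuous θ := by
    refine continuous_finset_sum _ fun x _ => Continuous.max ?_ ?_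
    · exact (continuous_finset_sum _ fun i _ =>
        (continuous_apply i).mul continuous_const).mul continuous_const
    · exact ((continuous_finset_sum _ fun i _ =>
        (continuous_apply i).mul continuous_const).mul continuous_const).neg
  have hbase : ∀ (M : ℕ) (zc : Fin nn → ℤ), 0 < M → 0 ≤ θ (fun i => (zc i : ℝ) / M) := by
    intro M zc hM
    rw [hθq]
    have hMpos : (0:ℝ) < (M:ℝ)⁻¹ := by positivity
    have hform : (∑ i, ((zc i : ℝ) / M) • (rr i : X →₀ ℝ))
        = ((M:ℝ)⁻¹) • ∑ i, (zc i : ℝ) • (rr i : X →₀ ℝ) := by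
      rw [Finset.smul_sum]
      refine Finset.sum_congr rfl fun i _ => ?_
      rw [smul_smul]
      congr 1
      field_simp
    rw [hform, qgauge_smul C hMpos]
    have h0 : 0 ≤ qgauge C (∑ i, (zc i : ℝ) • (rr i : X →₀ ℝ)) := by
      have heq : (∑ i, (zc i : ℝ) • (rr i : X →₀ ℝ)) = ∑ i, (zc i : ℝ) •
          (Finsupp.single (xs i + ys i) (1:ℝ) - Finsupp.single (xs i) 1
            - Finsupp.single (ys i) 1) := by
        refine Finset.sum_congr rfl fun i _ => by rw [hxy i]
      rw [heq]
      exact qgauge_nonneg_int hP nn zc xs ys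
    exact mul_nonneg hMpos.le h0
  have hdense : Dense {c' : Fin nn → ℝ |
      ∃ (M : ℕ) (zc : Fin nn → ℤ), 0 < M ∧ c' = fun i => (zc i : ℝ) / M} := by
    rw [Metric.dense_iff]
    intro x r hr
    obtain ⟨M, hM⟩ := exists_nat_gt (1 / r)
    have hM0 : 0 < M := by
      by_contra hc
      push_neg at hc
      interval_cases M
      simp at hM
      nlinarith [hM]
    have hMR : (0:ℝ) < M := by exact_mod_cast hM0
    have hrM : 1 < r * M := by
      rw [div_lt_iff₀ hr] at hM
      nlinarith
    refine ⟨fun i => ((⌊x i * M⌋ : ℝ))/M, ?_, M, fun i => ⌊x i * M⌋, hM0, rfl⟩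
    rw [Metric.mem_ball, dist_pi_lt_iff hr]
    intro i
    have h1 : (⌊x i * M⌋ : ℝ) ≤ x i * M := Int.floor_le _
    have h2 : x i * M < ⌊x i * M⌋ + 1 := Int.lt_floor_add_one _
    rw [Real.dist_eq]
    have hdiv : (⌊x i * M⌋ : ℝ)/M - x i = ((⌊x i * M⌋ : ℝ) - x i * M)/M := by
      field_simp
    rw [hdiv, abs_div, abs_of_pos hMR, div_lt_iff₀ hMR, abs_lt]
    constructor <;> nlinarith
  have hclosed : IsClosed {c' : Fin nn → ℝ | 0 ≤ θ c'} :=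
    isClosed_le continuous_const hcont
  have hsub : {c' : Fin nn → ℝ |
      ∃ (M : ℕ) (zc : Fin nn → ℤ), 0 < M ∧ c' = fun i => (zc i : ℝ) / M}
      ⊆ {c' | 0 ≤ θ c'} := by
    rintro c' ⟨M, zc, hM, rfl⟩
    exact hbase M zc hM
  have hall : 0 ≤ θ c := by
    have hcl := closure_minimal hsub hclosed
    have : c ∈ closure {c' : Fin nn → ℝ |
        ∃ (M : ℕ) (zc : Fin nn → ℤ), 0 < M ∧ c' = fun i => (zc i : ℝ) / M} := by
      rw [hdense.closure_eq]
      trivial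
    exact hcl this
  rw [hθq] at hall
  rwa [hsum] at hall

theorem exists_additive_le (C : X → ℝ) (hP : CycPos C) :
    ∃ b : X → ℝ, (∀ x y, b (x + y) = b x + b y) ∧ ∀ x, b x ≤ C x := by
  classical
  set R : Set (X →₀ ℝ) := {u : X →₀ ℝ | ∃ x y : X,
    u = Finsupp.single (x+y) (1:ℝ) - Finsupp.single x 1 - Finsupp.single y 1} with hR
  set f₀ : (X →₀ ℝ) →ₗ.[ℝ] ℝ := ⟨Submodule.span ℝ R, 0⟩ with hf₀
  obtain ⟨L, hL0, hLle⟩ := exists_extension_of_le_sublinear f₀ (qgauge C)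
    (fun c hc x => qgauge_smul C hc x) (qgauge_add C)
    (fun x => by
      have h0 : (f₀ x : ℝ) = 0 := rfl
      rw [h0]
      exact qgauge_nonneg_span hP x.2)
  refine ⟨fun y => L (Finsupp.single y 1), ?_, ?_⟩
  · intro x y
    have hmem : (Finsupp.single (x+y) (1:ℝ) - Finsupp.single x 1 - Finsupp.single y 1)
        ∈ Submodule.span ℝ R := Submodule.subset_span ⟨x, y, rfl⟩
    have hz := hL0 ⟨_, hmem⟩
    have h0 : (f₀ ⟨_, hmem⟩ : ℝ) = 0 := rfl
    rw [h0] at hz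
    simp only [map_sub] at hz
    linarith
  · intro x
    have hle := hLle (Finsupp.single x 1)
    have hq : qgauge C (Finsupp.single x 1) = C x := by
      rw [qgauge_eq C (Finsupp.support_single_subset), Finset.sum_singleton]
      simp only [Finsupp.single_eq_same, one_mul]
      exact max_eq_left (by nlinarith [hP.pair x])
    rwa [hq] at hle



theorem key_ineq {X₁ X₂ : Type*} [AddCommGroup X₁] [AddCommGroup X₂]
    {p : ℕ} (hp : 1 < p) (hsurj : Function.Surjective fun x : X₁ => p • x)
    (T : X₁ → X₂) (hT : ∀ x y, T (x + y) = T x + T y)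
    (f : X₁ → ℝ) (g : X₂ → ℝ) (hf : RConvexFn f) (hg : RConvexFn g)
    (x₀ : X₁) (φ : X₁ → ℝ) (hφ : ∀ x y, φ (x + y) = φ x + φ y)
    (hmem : ∀ h, f x₀ + g (T x₀) + φ h ≤ f (x₀ + h) + g (T x₀ + T h))
    (n : ℕ) (m : Fin n → ℕ) (hm : ∀ i, 0 < m i) (z : Fin n → X₂)
    (hz : ∑ i, m i • z i = 0) (h : Fin n → X₁) :
    0 ≤ ∑ i, (m i : ℝ) *
      ((f (x₀ + h i) - f x₀ - φ (h i)) + (g (T x₀ + (z i + T (h i))) - g (T x₀))) := by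
  classical
  set Φ : X₁ →+ ℝ := AddMonoidHom.mk' φ hφ with hΦ
  set T' : X₁ →+ X₂ := AddMonoidHom.mk' T hT with hT'
  set N : ℕ := ∑ i, m i with hN
  have hpow : ∀ k : ℕ, Function.Surjective fun x : X₁ => p ^ k • x := by
    intro k
    induction k with
    | zero => intro y; exact ⟨y, by simp⟩
    | succ k ih =>
      intro y
      obtain ⟨w, hw⟩ := ih y
      obtain ⟨u, hu⟩ := hsurj w
      refine ⟨u, ?_⟩
      simp only at hw hu ⊢
      rw [pow_succ, mul_smul, hu, hw]
  have hNlt : N < p ^ N := Nat.lt_pow_self hp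
  set r : ℕ := p ^ N - N with hrdef
  have hr : 0 < r := Nat.sub_pos_of_lt hNlt
  have hrN : r + N = p ^ N := Nat.sub_add_cancel hNlt.le
  obtain ⟨u, hu⟩ := hpow N (∑ i, m i • h i)
  simp only at hu
  -- sums of m' over Fin (n+1)
  set m' : Fin (n+1) → ℕ := Fin.cons r m with hm'
  have hm'pos : ∀ i, 0 < m' i := Fin.cases hr hm
  have hm'sum : ∑ i, m' i = p ^ N := by
    rw [hm', Fin.sum_cons, ← hN, hrN]
  -- f inequality
  have hsplit : ∑ i : Fin n, m i • (x₀ + h i) = N • x₀ + ∑ i, m i • h i := by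
    simp only [smul_add]
    rw [Finset.sum_add_distrib, hN, Finset.sum_smul]
  have hconf : (∑ i, m' i) • (x₀ + u)
      = ∑ i, m' i • (Fin.cons x₀ (fun i => x₀ + h i) : Fin (n+1) → X₁) i := by
    rw [hm'sum, Fin.sum_univ_succ]
    simp only [hm', Fin.cons_zero, Fin.cons_succ]
    rw [hsplit, ← hu, smul_add, ← add_assoc, ← add_nsmul, hrN]
  have hinef := hf (n+1) n.succ_pos m' hm'pos _ (x₀ + u) hconf
  -- g inequality
  have hTsum : ∑ i : Fin n, m i • T (h i) = (p ^ N) • T u := by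
    have h1 : ∀ i : Fin n, m i • T (h i) = T' (m i • h i) := by
      intro i
      rw [map_nsmul]
      rfl
    calc ∑ i : Fin n, m i • T (h i) = ∑ i : Fin n, T' (m i • h i) :=
          Finset.sum_congr rfl fun i _ => h1 i
      _ = T' (∑ i, m i • h i) := (map_sum T' _ _).symm
      _ = T' (p ^ N • u) := by rw [hu]
      _ = (p ^ N) • T u := by rw [map_nsmul]; rfl
  have hsplitg : ∑ i : Fin n, m i • (T x₀ + (z i + T (h i)))
      = N • T x₀ + (p ^ N) • T u := by
    simp only [smul_add]
    rw [Finset.sum_add_distrib, Finset.sum_add_distrib, hz, hTsum, hN, Finset.sum_smul]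
    abel
  have hcong : (∑ i, m' i) • (T x₀ + T u)
      = ∑ i, m' i • (Fin.cons (T x₀) (fun i => T x₀ + (z i + T (h i))) : Fin (n+1) → X₂) i := by
    rw [hm'sum, Fin.sum_univ_succ]
    simp only [hm', Fin.cons_zero, Fin.cons_succ]
    rw [hsplitg, smul_add, ← add_assoc, ← add_nsmul, hrN]
  have hineg := hg (n+1) n.succ_pos m' hm'pos _ (T x₀ + T u) hcong
  -- φ
  have hφu : (p:ℝ) ^ N * φ u = ∑ i, (m i : ℝ) * φ (h i) := by
    have h1 : φ (p ^ N • u) = (p ^ N : ℕ) • φ u := by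
      rw [show φ (p ^ N • u) = Φ (p ^ N • u) from rfl, map_nsmul]
      rfl
    have h2 : φ (∑ i, m i • h i) = ∑ i, (m i : ℝ) * φ (h i) := by
      rw [show φ (∑ i, m i • h i) = Φ (∑ i, m i • h i) from rfl, map_sum]
      refine Finset.sum_congr rfl fun i _ => ?_
      rw [map_nsmul, nsmul_eq_mul]
      rfl
    rw [← h2, ← hu, h1, nsmul_eq_mul]
    push_cast
    ring
  rw [hm'sum] at hinef hineg
  rw [Fin.sum_univ_succ] at hinef hineg
  simp only [hm', Fin.cons_zero, Fin.cons_succ] at hinef hineg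
  push_cast at hinef hineg
  have hPpos : (0:ℝ) < (p:ℝ) ^ N := by positivity
  have hmul := mul_le_mul_of_nonneg_left (hmem u) hPpos.le
  rw [mul_add, mul_add, mul_add] at hmul
  have hrNR : (r:ℝ) + (N:ℝ) = (p:ℝ)^N := by exact_mod_cast hrN
  have hNc : ∀ c : ℝ, (N:ℝ) * c = ∑ i, (m i:ℝ) * c := by
    intro c
    rw [hN]
    push_cast
    rw [Finset.sum_mul]
  have hexp : ∑ i, (m i : ℝ) * ((f (x₀ + h i) - f x₀ - φ (h i))
        + (g (T x₀ + (z i + T (h i))) - g (T x₀)))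
      = (∑ i, (m i:ℝ) * f (x₀ + h i)) - (N:ℝ) * f x₀ - (∑ i, (m i:ℝ) * φ (h i))
        + ((∑ i, (m i:ℝ) * g (T x₀ + (z i + T (h i)))) - (N:ℝ) * g (T x₀)) := by
    rw [hNc (f x₀), hNc (g (T x₀)), ← Finset.sum_sub_distrib, ← Finset.sum_sub_distrib,
      ← Finset.sum_sub_distrib, ← Finset.sum_add_distrib]
    exact Finset.sum_congr rfl fun i _ => by ring
  rw [hexp]
  have e1 : (p:ℝ)^N * f x₀ = (r:ℝ) * f x₀ + (N:ℝ) * f x₀ := by rw [← hrNR]; ring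
  have e2 : (p:ℝ)^N * g (T x₀) = (r:ℝ) * g (T x₀) + (N:ℝ) * g (T x₀) := by
    rw [← hrNR]; ring
  linarith [hinef, hineg, hmul, hφu, e1, e2]

end Aux

/-- Sum rule for subdifferentials: for convex `f`, `g`, a semidivisible `X₁`, an additive
`T : X₁ → X₂` and an additive `φ : X₁ → ℝ`, one has `φ ∈ ∂(f + g∘T)(x₀)` iff
`φ = a + b∘T` with `a ∈ ∂f(x₀)` and `b ∈ ∂g(Tx₀)`. -/
theorem subdiff_sum_rule {X₁ X₂ : Type*} [AddCommGroup X₁] [AddCommGroup X₂]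
    (hdiv : ∃ p : ℕ, p.Prime ∧ Function.Surjective fun x : X₁ => p • x)
    (T : X₁ → X₂) (hT : ∀ x y, T (x + y) = T x + T y)
    (f : X₁ → ℝ) (g : X₂ → ℝ) (hf : RConvexFn f) (hg : RConvexFn g)
    (x₀ : X₁) (φ : X₁ → ℝ) (hφ : ∀ x y, φ (x + y) = φ x + φ y) :
    φ ∈ subdiff (fun x => f x + g (T x)) x₀ ↔
      ∃ a ∈ subdiff f x₀, ∃ b ∈ subdiff g (T x₀), φ = fun x => a x + b (T x) := by
  classical
  have hT0 : T 0 = 0 := by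
    have h := hT 0 0
    rw [add_zero] at h
    exact (left_eq_add.mp h)
  have hφ0 : φ 0 = 0 := by
    have h := hφ 0 0
    rw [add_zero] at h
    exact (left_eq_add.mp h)
  constructor
  · rintro ⟨hφadd, hle⟩
    obtain ⟨p, hp, hsurj⟩ := hdiv
    have hp1 : 1 < p := hp.one_lt
    have hmem : ∀ h, f x₀ + g (T x₀) + φ h ≤ f (x₀ + h) + g (T x₀ + T h) := by
      intro h
      have h1 : f x₀ + g (T x₀) + φ h ≤ f (x₀ + h) + g (T (x₀ + h)) := hle h
      rw [hT x₀ h] at h1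
      linarith
    set E : X₂ → X₁ → ℝ := fun k hh =>
      (f (x₀ + hh) - f x₀ - φ hh) + (g (T x₀ + (k + T hh)) - g (T x₀)) with hE
    have hkey : ∀ (n : ℕ) (m : Fin n → ℕ), (∀ i, 0 < m i) → ∀ (z : Fin n → X₂),
        (∑ i, m i • z i = 0) → ∀ h : Fin n → X₁,
        0 ≤ ∑ i, (m i : ℝ) * E (z i) (h i) :=
      fun n m hm z hz h => key_ineq hp1 hsurj T hT f g hf hg x₀ φ hφ hmem n m hm z hz h
    have hpair2 : ∀ (k : X₂) (hh hh' : X₁), 0 ≤ E k hh + E (-k) hh' := by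
      intro k hh hh'
      have h2 := hkey 2 (fun _ => 1) (fun _ => one_pos) ![k, -k] (by
        rw [Fin.sum_univ_two]
        simp) ![hh, hh']
      rw [Fin.sum_univ_two] at h2
      simpa using h2
    have hne : ∀ k, (Set.range (E k)).Nonempty := fun k => ⟨_, ⟨0, rfl⟩⟩
    have hbdd : ∀ k, BddBelow (Set.range (E k)) := by
      intro k
      refine ⟨-(E (-k) 0), ?_⟩
      rintro a ⟨hh, rfl⟩
      have := hpair2 k hh 0
      linarith
    set C : X₂ → ℝ := fun k => sInf (Set.range (E k)) with hC
    have hCle : ∀ k hh, C k ≤ E k hh := fun k hh => csInf_le (hbdd k) ⟨hh, rfl⟩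
    -- cyclic positivity of C, Fin-indexed
    have hcycfin : ∀ (n : ℕ) (m : Fin n → ℕ), (∀ i, 0 < m i) → ∀ (z : Fin n → X₂),
        (∑ i, m i • z i = 0) → 0 ≤ ∑ i, (m i : ℝ) * C (z i) := by
      intro n m hm z hz
      rcases Nat.eq_zero_or_pos n with hn | hn
      · subst hn
        simp
      have hN1 : 0 < ∑ i, m i := by
        calc 0 < m ⟨0, hn⟩ := hm _
          _ ≤ ∑ i, m i := Finset.single_le_sum (f := fun i => m i)
              (fun i _ => Nat.zero_le _) (Finset.mem_univ _)
      have hNR : (0:ℝ) < ((∑ i, m i : ℕ) : ℝ) := by exact_mod_cast hN1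
      have hstep : ∀ ε : ℝ, 0 < ε → 0 ≤ (∑ i, (m i : ℝ) * C (z i)) + ((∑ i, m i : ℕ) : ℝ) * ε := by
        intro ε hε
        have hpick : ∀ i : Fin n, ∃ hh : X₁, E (z i) hh < C (z i) + ε := by
          intro i
          obtain ⟨a, ha, hlt⟩ := Real.lt_sInf_add_pos (hne (z i)) hε
          obtain ⟨hh, rfl⟩ := ha
          exact ⟨hh, hlt⟩
        choose hh hhlt using hpick
        have h0 := hkey n m hm z hz hh
        have h1 : ∑ i, (m i : ℝ) * E (z i) (hh i) ≤ ∑ i, (m i : ℝ) * (C (z i) + ε) :=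
          Finset.sum_le_sum fun i _ => by
            have : (0:ℝ) ≤ (m i : ℝ) := by positivity
            nlinarith [hhlt i]
        have h2 : ∑ i, (m i : ℝ) * (C (z i) + ε)
            = (∑ i, (m i : ℝ) * C (z i)) + ((∑ i, m i : ℕ) : ℝ) * ε := by
          push_cast
          rw [Finset.sum_mul, ← Finset.sum_add_distrib]
          exact Finset.sum_congr rfl fun i _ => by ring
        linarith
      by_contra hcon
      push_neg at hcon
      set S : ℝ := ∑ i, (m i : ℝ) * C (z i) with hS
      set NR : ℝ := ((∑ i, m i : ℕ) : ℝ) with hNRdef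
      have hNR0 : NR ≠ 0 := ne_of_gt hNR
      have hε : 0 < -S / (2 * NR) := div_pos (neg_pos.mpr hcon) (by positivity)
      have h4 := hstep (-S / (2 * NR)) hε
      have h5 : NR * (-S / (2 * NR)) = -S / 2 := by
        field_simp
      linarith
    -- convert to Finset-indexed cyclic positivity
    have hcyc : CycPos C := by
      intro s m z hpos hrel
      have e := s.equivFin
      have h1 : ∑ i : Fin s.card, (m (e.symm i : X₂)) • (z (e.symm i : X₂))
          = ∑ x ∈ s, m x • z x := by
        rw [← Finset.sum_coe_sort s (fun x => m x • z x)]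
        exact Equiv.sum_comp e.symm (fun a : {x // x ∈ s} => m (a : X₂) • z (a : X₂))
      have h2 := hcycfin s.card (fun i => m (e.symm i : X₂)) (fun i => hpos _ (e.symm i).2)
        (fun i => z (e.symm i : X₂)) (by rw [h1, hrel])
      rw [← Finset.sum_coe_sort s (fun x => (m x : ℝ) * C (z x))]
      rw [← Equiv.sum_comp e.symm (fun a : {x // x ∈ s} => (m (a : X₂) : ℝ) * C (z (a : X₂)))]
      exact h2
    obtain ⟨b, hbadd, hble⟩ := exists_additive_le C hcyc
    have hb0 : b 0 = 0 := by
      have h := hbadd 0 0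
      rw [add_zero] at h
      exact (left_eq_add.mp h)
    have hbneg : ∀ k, b (-k) = -b k := by
      intro k
      have h := hbadd k (-k)
      rw [add_neg_cancel, hb0] at h
      linarith
    refine ⟨fun x => φ x - b (T x), ⟨?_, ?_⟩, b, ⟨hbadd, ?_⟩, ?_⟩
    · intro x y
      show φ (x + y) - b (T (x + y)) = (φ x - b (T x)) + (φ y - b (T y))
      rw [hφ, hT x y, hbadd]
      ring
    · intro h
      show f x₀ + (φ h - b (T h)) ≤ f (x₀ + h)
      have h1 : C (-(T h)) ≤ E (-(T h)) h := hCle _ _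
      have h2 : E (-(T h)) h = f (x₀ + h) - f x₀ - φ h := by
        rw [hE]
        simp only [neg_add_cancel, add_zero]
        ring
      have h3 := hble (-(T h))
      rw [hbneg] at h3
      linarith
    · intro k
      have h1 : C k ≤ E k 0 := hCle k 0
      have h2 : E k 0 = g (T x₀ + k) - g (T x₀) := by
        rw [hE]
        simp only [hT0, hφ0, add_zero]
        ring
      have h3 := hble k
      linarith
    · funext x
      show φ x = (φ x - b (T x)) + b (T x)
      ring
  · rintro ⟨a, ⟨haadd, hale⟩, b, ⟨hbadd, hble⟩, hPhi⟩
    refine ⟨hφ, ?_⟩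
    intro h
    show f x₀ + g (T x₀) + φ h ≤ f (x₀ + h) + g (T (x₀ + h))
    have hφh : φ h = a h + b (T h) := by rw [hPhi]
    have h3 : g (T (x₀ + h)) = g (T x₀ + T h) := by rw [hT]
    have h1 := hale h
    have h2 := hble (T h)
    linarith
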